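/- Let (M, F_•M) be a coherent filtered D-module on a complex manifold Y whose filtration is good and exhaustive. If the graded complex gr^F_p DR(M) is acyclic for all p ≥ p_0 + 1, then the inclusion of the subcomplex F_{p_0} DR(M) into DR(M) is a quasi-isomorphism. -/

import Mathlib

/-!
STATEMENT 6: Let `(M, F_•M)` be a coherent filtered `D`-module on a complex manifold `Y` with a
good exhaustive filtration.  If `gr^F_p DR(M)` is acyclic for all `p ≥ p₀ + 1`, then the
inclusion `F_{p₀} DR(M) ↪ DR(M)` is a quasi-isomorphism.

We model the de Rham complex `DR(M)` and its filtration in an abelian category `C` (sheaves of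
vector spaces on `Y`): complexes `Ffil p = F_p DR(M)` with degreewise-mono maps `ι p` into
`DR`, transition maps `incl p : F_{p-1} DR(M) → F_p DR(M)`, and quotient complexes
`gr p = gr^F_p DR(M)` fitting into degreewise short exact sequences
`0 → F_{p-1} DR(M) → F_p DR(M) → gr^F_p DR(M) → 0`.  Exhaustiveness of the good filtration is
expressed by the (local, degreewise) stabilization `∃ p, ι p` is an isomorphism in each degree.
-/

open CategoryTheory

theorem stmt6 {C : Type*} [Category C] [Abelian C]
    (Ffil : ℤ → CochainComplex C ℤ) (DR : CochainComplex C ℤ)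
    (gr : ℤ → CochainComplex C ℤ)
    (ι : ∀ p : ℤ, Ffil p ⟶ DR)
    (incl : ∀ p : ℤ, Ffil (p - 1) ⟶ Ffil p)
    (π : ∀ p : ℤ, Ffil p ⟶ gr p)
    -- the filtration is by subcomplexes of `DR(M)`, compatibly:
    (hmono : ∀ (p i : ℤ), Mono ((ι p).f i))
    (hcomm : ∀ p : ℤ, incl p ≫ ι p = ι (p - 1))
    -- `0 → F_{p-1} DR(M) → F_p DR(M) → gr^F_p DR(M) → 0` is exact in each degree:
    (hw : ∀ (p i : ℤ), (incl p).f i ≫ (π p).f i = 0)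
    (hses : ∀ (p i : ℤ), (ShortComplex.mk ((incl p).f i) ((π p).f i) (hw p i)).ShortExact)
    -- the filtration is exhaustive (and, being good, stabilizes degreewise):
    (hexh : ∀ i : ℤ, ∃ p : ℤ, IsIso ((ι p).f i))
    (p₀ : ℤ)
    -- `gr^F_p DR(M)` is acyclic for all `p ≥ p₀ + 1`:
    (hacy : ∀ p : ℤ, p₀ + 1 ≤ p → ∀ i : ℤ, (gr p).ExactAt i) :
    QuasiIso (ι p₀) := by
  -- Step 1: each `incl p` with `p ≥ p₀ + 1` is a quasi-isomorphism.
  have hincl : ∀ p : ℤ, p₀ + 1 ≤ p → QuasiIso (incl p) := by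
    intro p hp
    have hS : (ShortComplex.mk (incl p) (π p)
        (by ext i; exact hw p i)).ShortExact :=
      HomologicalComplex.shortExact_of_degreewise_shortExact _ (fun i => hses p i)
    have hz : ∀ i : ℤ, Limits.IsZero ((gr p).homology i) := fun i =>
      (HomologicalComplex.exactAt_iff_isZero_homology _ _).1 (hacy p hp i)
    rw [quasiIso_iff]
    intro n
    rw [quasiIsoAt_iff_isIso_homologyMap]
    have rel : (ComplexShape.up ℤ).Rel (n - 1) n := by
      simp only [ComplexShape.up_Rel]; omega
    have ex₁ := hS.homology_exact₁ (n - 1) n rel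
    have hδ : hS.δ (n - 1) n rel = 0 := (hz (n - 1)).eq_of_src _ _
    have hm : Mono (HomologicalComplex.homologyMap (incl p) n) := ex₁.mono_g hδ
    have ex₂ := hS.homology_exact₂ n
    have hg0 : HomologicalComplex.homologyMap (π p) n = 0 := (hz n).eq_of_tgt _ _
    have he : Epi (HomologicalComplex.homologyMap (incl p) n) := ex₂.epi_f hg0
    exact isIso_of_mono_of_epi _
  -- auxiliary cast lemma
  have hcast : ∀ {a b : ℤ} (hab : a = b) (h : Ffil a = Ffil b),
      eqToHom h ≫ ι b = ι a := by
    rintro a b rfl h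
    simp
  -- Step 2: degreewise isomorphy of `ι` propagates upwards along the filtration.
  have hup : ∀ (i p q : ℤ), p ≤ q → IsIso ((ι p).f i) → IsIso ((ι q).f i) := by
    intro i p q hpq h
    refine Int.le_induction (motive := fun q _ => IsIso ((ι q).f i)) h ?_ q hpq
    intro q hq ih
    · have e : Ffil q = Ffil (q + 1 - 1) := by congr 1; omega
      have hc : (eqToHom e ≫ incl (q + 1)) ≫ ι (q + 1) = ι q := by
        rw [Category.assoc, hcomm, hcast (by omega) e]
      have h2 : ((eqToHom e ≫ incl (q + 1)).f i) ≫ ((ι (q + 1)).f i) = (ι q).f i := by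
        rw [← HomologicalComplex.comp_f, hc]
      haveI := ih
      haveI hepi : Epi (((eqToHom e ≫ incl (q + 1)).f i) ≫ ((ι (q + 1)).f i)) := by
        rw [h2]; infer_instance
      haveI : Epi ((ι (q + 1)).f i) := epi_of_epi ((eqToHom e ≫ incl (q + 1)).f i) ((ι (q + 1)).f i)
      haveI := hmono (q + 1) i
      exact isIso_of_mono_of_epi _
  -- Step 3: for every `q ≥ p₀` there is a quasi-isomorphism `Ffil p₀ ⟶ Ffil q` over `DR`.
  have hθ : ∀ q : ℤ, p₀ ≤ q → ∃ θ : Ffil p₀ ⟶ Ffil q, θ ≫ ι q = ι p₀ ∧ QuasiIso θ := by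
    intro q hq
    refine Int.le_induction (motive := fun q _ => ∃ θ : Ffil p₀ ⟶ Ffil q, θ ≫ ι q = ι p₀ ∧ QuasiIso θ) ⟨𝟙 _, by simp, inferInstance⟩ ?_ q hq
    intro q hq ih
    · obtain ⟨θ, hθ1, hθ2⟩ := ih
      have e : Ffil q = Ffil (q + 1 - 1) := by congr 1; omega
      refine ⟨θ ≫ eqToHom e ≫ incl (q + 1), ?_, ?_⟩
      · rw [Category.assoc, Category.assoc, hcomm, hcast (by omega) e, hθ1]
      · haveI := hθ2
        haveI : QuasiIso (incl (q + 1)) := hincl (q + 1) (by omega)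
        infer_instance
  -- Step 4: conclude.
  rw [quasiIso_iff]
  intro n
  obtain ⟨a, ha⟩ := hexh (n - 1)
  obtain ⟨b, hb⟩ := hexh n
  obtain ⟨c, hc⟩ := hexh (n + 1)
  set p : ℤ := max (max a b) (max c p₀) with hpdef
  have hp0 : p₀ ≤ p := le_trans (le_max_right _ _) (le_max_right _ _)
  have h1 : IsIso ((ι p).f (n - 1)) :=
    hup _ a p (le_trans (le_max_left _ _) (le_max_left _ _)) ha
  have h2 : IsIso ((ι p).f n) :=
    hup _ b p (le_trans (le_max_right _ _) (le_max_left _ _)) hb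
  have h3 : IsIso ((ι p).f (n + 1)) :=
    hup _ c p (le_trans (le_max_left _ _) (le_max_right _ _)) hc
  obtain ⟨θ, hθ1, hθ2⟩ := hθ p hp0
  haveI := hθ2
  have hqp : QuasiIsoAt (ι p) n := by
    rw [quasiIsoAt_iff]
    haveI i1 : IsIso (((HomologicalComplex.shortComplexFunctor C
        (ComplexShape.up ℤ) n).map (ι p)).τ₁) := by
      show IsIso ((ι p).f ((ComplexShape.up ℤ).prev n))
      rw [CochainComplex.prev]; exact h1
    haveI i2 : IsIso (((HomologicalComplex.shortComplexFunctor C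
        (ComplexShape.up ℤ) n).map (ι p)).τ₂) := h2
    haveI i3 : IsIso (((HomologicalComplex.shortComplexFunctor C
        (ComplexShape.up ℤ) n).map (ι p)).τ₃) := by
      show IsIso ((ι p).f ((ComplexShape.up ℤ).next n))
      rw [CochainComplex.next]; exact h3
    haveI := ShortComplex.isIso_of_isIso ((HomologicalComplex.shortComplexFunctor C
        (ComplexShape.up ℤ) n).map (ι p))
    infer_instance
  rw [← hθ1]
  exact quasiIsoAt_comp θ (ι p) n
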